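/- Let A be an n×n real skew-symmetric matrix whose graph is a tree T, and suppose A has the Duarte property with respect to a vertex w. If X is a real skew-symmetric matrix such that A ∘ X = 0 (entrywise Hadamard product is zero) and the commutator [A,X] = AX - XA has all entries zero outside row w and column w (i.e., [A,X](w) = 0), then X = 0. -/

import Mathlib

open Polynomial Matrix Finset
open scoped Classical

noncomputable section

/-- The graph of a square real matrix: `i ~ j` iff `i ≠ j` and the `(i,j)` or
`(j,i)` entry is nonzero. -/
def graphOf {N : ℕ} (A : Matrix (Fin N) (Fin N) ℝ) : SimpleGraph (Fin N) :=
  SimpleGraph.fromRel (fun i j => A i j ≠ 0)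

/-- The principal submatrix of `A` on the index set `S`. -/
def subOn {N : ℕ} (A : Matrix (Fin N) (Fin N) ℝ) (S : Finset (Fin N)) :
    Matrix {x // x ∈ S} {x // x ∈ S} ℝ :=
  A.submatrix (fun x => x.1) (fun x => x.1)

/-- The vertex set of the connected component of `v` in the subgraph of `G`
induced on `S`. -/
def comp {N : ℕ} (G : SimpleGraph (Fin N)) (S : Finset (Fin N)) (v : Fin N) :
    Finset (Fin N) :=
  S.filter (fun u => ∃ w : G.Walk v u, ∀ x ∈ w.support, x ∈ S)

/-- The eigenvalues of the real skew-symmetric matrix `A` are `i·l 0, …`,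
expressed via the characteristic polynomial over `ℂ`. -/
def specIm {m : Type} [Fintype m] [DecidableEq m] (A : Matrix m m ℝ)
    (l : Fin (Fintype.card m) → ℝ) : Prop :=
  (A.map (Complex.ofReal : ℝ → ℂ)).charpoly = ∏ j, (X - C (Complex.I * (l j : ℂ)))

/-- The (purely imaginary) spectrum of `B` strictly interlaces that of `A`,
in the ordering `i·a ≤ i·b ↔ a ≤ b`. -/
def StrictInterlace {m m' : Type} [Fintype m] [DecidableEq m] [Fintype m'] [DecidableEq m']
    (A : Matrix m m ℝ) (B : Matrix m' m' ℝ) : Prop :=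
  ∃ (h : Fintype.card m' + 1 = Fintype.card m) (l : Fin (Fintype.card m) → ℝ)
    (mu : Fin (Fintype.card m') → ℝ),
    specIm A l ∧ specIm B mu ∧
      ∀ j : Fin (Fintype.card m'),
        l (Fin.cast h j.castSucc) < mu j ∧ mu j < l (Fin.cast h j.succ)

/-- Fuel-based recursion for the Duarte property of the principal submatrix of
`A` on `S` with respect to the vertex `w ∈ S`. -/
def DuarteAux {N : ℕ} (A : Matrix (Fin N) (Fin N) ℝ) :
    ℕ → Finset (Fin N) → Fin N → Prop
  | 0, S, w => S = {w}
  | (k + 1), S, w => S = {w} ∨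
      (StrictInterlace (subOn A S) (subOn A (S.erase w)) ∧
        ∀ v ∈ S.erase w, (graphOf A).Adj w v →
          DuarteAux A k (comp (graphOf A) (S.erase w) v) v)

/-- `A` has the Duarte property with respect to the vertex `w`. -/
def Duarte {N : ℕ} (A : Matrix (Fin N) (Fin N) ℝ) (w : Fin N) : Prop :=
  DuarteAux A N Finset.univ w

/-- Fuel-based recursion for the nearly even branching (NEB) property of the
subtree of `T` on `S` at the vertex `w ∈ S`. -/
def NEBAux {N : ℕ} (T : SimpleGraph (Fin N)) : ℕ → Finset (Fin N) → Fin N → Prop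
  | 0, S, w => S = {w}
  | (k + 1), S, w => S = {w} ∨
      ((((S.erase w).filter
            (fun v => T.Adj w v ∧ Odd (comp T (S.erase w) v).card)).card
          = if Even S.card then 1 else 0) ∧
        ∀ v ∈ S.erase w, T.Adj w v → NEBAux T k (comp T (S.erase w) v) v)

/-- The tree `T` is nearly even branching (NEB) at the vertex `w`. -/
def NEB {N : ℕ} (T : SimpleGraph (Fin N)) (w : Fin N) : Prop :=
  NEBAux T N Finset.univ w

variable {n : Type*} [Fintype n] [DecidableEq n]

lemma my_eval_charpoly {R : Type*} [CommRing R] (M : Matrix n n R) (r : R) :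
    M.charpoly.eval r = (r • (1 : Matrix n n R) - M).det := by
  rw [Matrix.charpoly]
  rw [← Polynomial.coe_evalRingHom, RingHom.map_det, RingHom.mapMatrix_apply]
  congr 1
  ext i j
  by_cases hij : i = j
  · subst hij
    simp [Matrix.charmatrix_apply_eq, Matrix.one_apply, Matrix.smul_apply]
  · simp [Matrix.charmatrix_apply_ne _ _ _ hij, Matrix.one_apply_ne hij, Matrix.smul_apply]

lemma my_isUnit_sub_smul {K : Type*} [Field K] (M : Matrix n n K) (r : K)
    (h : ¬ M.charpoly.IsRoot r) : IsUnit (M - r • (1 : Matrix n n K)) := by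
  rw [Matrix.isUnit_iff_isUnit_det, isUnit_iff_ne_zero]
  intro h0
  apply h
  rw [show M - r • (1 : Matrix n n K) = -(r • 1 - M) from (neg_sub _ _).symm,
    Matrix.det_neg] at h0
  have h1 : (r • (1 : Matrix n n K) - M).det = 0 := by
    rcases mul_eq_zero.mp h0 with h1 | h1
    · exact absurd h1 (pow_ne_zero _ (by norm_num))
    · exact h1
  rwa [Polynomial.IsRoot, my_eval_charpoly]

/-- intertwining extends to products of linear factors -/
lemma my_list_prod_comm {R : Type*} [CommRing R] {α β : Type*} [Fintype α] [Fintype β]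
    [DecidableEq α] [DecidableEq β]
    (P : Matrix α α R) (Q : Matrix β β R) (W : Matrix α β R) (h : P * W = W * Q) :
    ∀ rs : List R,
      (rs.map (fun r => P - r • (1 : Matrix α α R))).prod * W
        = W * (rs.map (fun r => Q - r • (1 : Matrix β β R))).prod := by
  intro rs
  induction rs with
  | nil => simp
  | cons r rs ih =>
      simp only [List.map_cons, List.prod_cons]
      have h1 : (P - r • 1) * W = W * (Q - r • 1) := by
        rw [Matrix.sub_mul, Matrix.mul_sub, h]
        congr 1
        rw [Matrix.smul_mul, Matrix.mul_smul, Matrix.one_mul, Matrix.mul_one]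
      rw [Matrix.mul_assoc, ih, ← Matrix.mul_assoc, h1, Matrix.mul_assoc]

lemma my_sylvester {α β : Type*} [Fintype α] [DecidableEq α] [Fintype β] [DecidableEq β]
    (P : Matrix α α ℝ) (Q : Matrix β β ℝ) (W : Matrix α β ℝ) (h : P * W = W * Q)
    (hdisj : ∀ r : ℂ, ((Q.map (Complex.ofReal : ℝ → ℂ)).charpoly).IsRoot r →
      ¬ ((P.map (Complex.ofReal : ℝ → ℂ)).charpoly).IsRoot r) :
    W = 0 := by
  set Pc := P.map (Complex.ofReal : ℝ → ℂ) with hPc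
  set Qc := Q.map (Complex.ofReal : ℝ → ℂ) with hQc
  set Wc := W.map (Complex.ofReal : ℝ → ℂ) with hWc
  have hC : Pc * Wc = Wc * Qc := by
    ext i j
    have h1 := congrFun (congrFun h i) j
    simp only [Matrix.mul_apply, hPc, hQc, hWc, Matrix.map_apply] at h1 ⊢
    push_cast
    exact_mod_cast congrArg (Complex.ofReal : ℝ → ℂ) h1
  set q := Qc.charpoly with hq
  have hmono : q.Monic := Matrix.charpoly_monic Qc
  have hsplit : q = (q.roots.map (fun a => X - C a)).prod :=
    (IsAlgClosed.splits q).eq_prod_roots_of_monic hmono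
  set rs := q.roots.toList with hrs
  have hq_eq : q = (rs.map (fun a => X - C a)).prod := by
    rw [hsplit]
    rw [show q.roots = (rs : Multiset ℂ) by rw [hrs, Multiset.coe_toList]]
    rw [show ((rs : Multiset ℂ).map (fun a => X - C a)) = ((rs.map (fun a => X - C a) : List ℂ[X]) : Multiset ℂ[X]) from rfl]
    exact Multiset.prod_coe _
  have hmemroot : ∀ r ∈ rs, q.IsRoot r := by
    intro r hr
    have : r ∈ q.roots := by rwa [hrs, Multiset.mem_toList] at hr
    exact (Polynomial.mem_roots hmono.ne_zero).mp this
  -- Cayley-Hamilton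
  have hCH : (rs.map (fun r => Qc - r • (1 : Matrix β β ℂ))).prod = 0 := by
    have h0 : Polynomial.aeval Qc q = 0 := Matrix.aeval_self_charpoly Qc
    rw [hq_eq] at h0
    rw [show Polynomial.aeval Qc ((rs.map (fun a => X - C a)).prod)
        = ((rs.map (fun a => X - C a)).map (Polynomial.aeval Qc)).prod from
      map_list_prod (Polynomial.aeval Qc : ℂ[X] →ₐ[ℂ] Matrix β β ℂ).toRingHom _] at h0
    rw [List.map_map] at h0
    rw [show (fun r : ℂ => Qc - r • (1 : Matrix β β ℂ)) = (⇑(Polynomial.aeval Qc) ∘ fun a => X - C a)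
      from funext fun r => by simp [Algebra.algebraMap_eq_smul_one]]
    exact h0
  have hkey : (rs.map (fun r => Pc - r • (1 : Matrix α α ℂ))).prod * Wc = 0 := by
    rw [my_list_prod_comm Pc Qc Wc hC rs, hCH, Matrix.mul_zero]
  have hunit : IsUnit ((rs.map (fun r => Pc - r • (1 : Matrix α α ℂ))).prod) := by
    apply List.prod_isUnit
    intro m hm
    rw [List.mem_map] at hm
    obtain ⟨r, hr, rfl⟩ := hm
    exact my_isUnit_sub_smul Pc r (hdisj r (hmemroot r hr))
  have hWc0 : Wc = 0 := by
    obtain ⟨u, hu⟩ := hunit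
    calc Wc = ((↑u⁻¹ : Matrix α α ℂ) * ↑u) * Wc := by rw [Units.inv_mul, Matrix.one_mul]
    _ = (↑u⁻¹ : Matrix α α ℂ) * ((↑u : Matrix α α ℂ) * Wc) := by rw [Matrix.mul_assoc]
    _ = 0 := by rw [hu, hkey, Matrix.mul_zero]
  ext i j
  have h2 : Complex.ofReal (W i j) = 0 := by
    have := congrFun (congrFun hWc0 i) j
    simpa [hWc, Matrix.map_apply] using this
  exact_mod_cast h2


lemma charpoly_subOn_split {N : ℕ} (A : Matrix (Fin N) (Fin N) ℝ) (S C : Finset (Fin N))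
    (hCS : C ⊆ S)
    (hblock : ∀ i j : Fin N, i ∈ C → j ∈ S → j ∉ C → A i j = 0 ∧ A j i = 0) :
    (subOn A S).charpoly = (subOn A C).charpoly * (subOn A (S \ C)).charpoly := by
  let e : ({x // x ∈ C} ⊕ {x // x ∈ S \ C}) ≃ {x // x ∈ S} :=
  { toFun := Sum.elim (fun a => ⟨a.1, hCS a.2⟩)
      (fun a => ⟨a.1, (Finset.mem_sdiff.mp a.2).1⟩)
    invFun := fun x => if h : x.1 ∈ C then Sum.inl ⟨x.1, h⟩
      else Sum.inr ⟨x.1, Finset.mem_sdiff.mpr ⟨x.2, h⟩⟩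
    left_inv := by
      rintro (⟨a, ha⟩ | ⟨a, ha⟩)
      · simp [ha]
      · simp [(Finset.mem_sdiff.mp ha).2]
    right_inv := by
      rintro ⟨x, hx⟩
      by_cases h : x ∈ C <;> simp [h] }
  have hmat : subOn A S
      = (fromBlocks (subOn A C) 0 0 (subOn A (S \ C))).submatrix ⇑e.symm ⇑e.symm := by
    ext ⟨x, hx⟩ ⟨y, hy⟩
    simp only [Matrix.submatrix_apply]
    by_cases hxC : x ∈ C <;> by_cases hyC : y ∈ C
    · simp only [e, Equiv.coe_fn_symm_mk, hxC, hyC, dif_pos]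
      rfl
    · simp only [e, Equiv.coe_fn_symm_mk, hxC, hyC, dif_pos, dif_neg, not_false_iff]
      rw [Matrix.fromBlocks_apply₁₂]
      exact (hblock x y hxC hy hyC).1
    · simp only [e, Equiv.coe_fn_symm_mk, hxC, hyC, dif_pos, dif_neg, not_false_iff]
      rw [Matrix.fromBlocks_apply₂₁]
      exact (hblock y x hyC hx hxC).2
    · simp only [e, Equiv.coe_fn_symm_mk, hxC, hyC, dif_neg, not_false_iff]
      rfl
  rw [hmat,
    show (fromBlocks (subOn A C) 0 0 (subOn A (S \ C))).submatrix ⇑e.symm ⇑e.symm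
      = Matrix.reindex e e (fromBlocks (subOn A C) 0 0 (subOn A (S \ C))) from rfl,
    Matrix.charpoly_reindex, Matrix.charpoly_fromBlocks_zero₂₁]

lemma no_common_root {N : ℕ} (A : Matrix (Fin N) (Fin N) ℝ) (S' Cs Cs' : Finset (Fin N))
    (hC : Cs ⊆ S') (hC' : Cs' ⊆ S' \ Cs)
    (hb1 : ∀ i j : Fin N, i ∈ Cs → j ∈ S' → j ∉ Cs → A i j = 0 ∧ A j i = 0)
    (hb2 : ∀ i j : Fin N, i ∈ Cs' → j ∈ S' \ Cs → j ∉ Cs' → A i j = 0 ∧ A j i = 0)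
    (mu : Fin (Fintype.card {x // x ∈ S'}) → ℝ) (hinj : Function.Injective mu)
    (hspec : ((subOn A S').map (Complex.ofReal : ℝ → ℂ)).charpoly
      = ∏ j, (X - C (Complex.I * (mu j : ℂ))))
    (r : ℂ) (h1 : (((subOn A Cs').map (Complex.ofReal : ℝ → ℂ)).charpoly).IsRoot r)
    (h2 : (((subOn A Cs).map (Complex.ofReal : ℝ → ℂ)).charpoly).IsRoot r) : False := by
  have hsplit1 : (subOn A S').charpoly = (subOn A Cs).charpoly * (subOn A (S' \ Cs)).charpoly :=
    charpoly_subOn_split A S' Cs hC hb1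
  have hsplit2 : (subOn A (S' \ Cs)).charpoly
      = (subOn A Cs').charpoly * (subOn A ((S' \ Cs) \ Cs')).charpoly :=
    charpoly_subOn_split A (S' \ Cs) Cs' hC' hb2
  have hmapc : ∀ (m : Type) [Fintype m] [DecidableEq m] (M : Matrix m m ℝ),
      (M.map (Complex.ofReal : ℝ → ℂ)).charpoly = M.charpoly.map Complex.ofRealHom := by
    intro m _ _ M
    exact Matrix.charpoly_map M Complex.ofRealHom
  set F := ((subOn A S').map (Complex.ofReal : ℝ → ℂ)).charpoly with hF
  have hdvd : ((subOn A Cs).map (Complex.ofReal : ℝ → ℂ)).charpoly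
      * ((subOn A Cs').map (Complex.ofReal : ℝ → ℂ)).charpoly ∣ F := by
    rw [hF, hmapc, hmapc, hmapc, hsplit1, hsplit2]
    rw [Polynomial.map_mul, Polynomial.map_mul]
    exact ⟨((subOn A ((S' \ Cs) \ Cs')).charpoly).map Complex.ofRealHom, by ring⟩
  have hFne : F ≠ 0 := (Matrix.charpoly_monic _).ne_zero
  have hsq : (X - C r) ^ 2 ∣ F := by
    refine dvd_trans ?_ hdvd
    rw [pow_two]
    exact mul_dvd_mul (Polynomial.dvd_iff_isRoot.mpr h2) (Polynomial.dvd_iff_isRoot.mpr h1)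
  have hmult : 2 ≤ Polynomial.rootMultiplicity r F :=
    (Polynomial.le_rootMultiplicity_iff hFne).mpr hsq
  -- but F is a product of distinct linear factors
  set c : Fin (Fintype.card {x // x ∈ S'}) → ℂ := fun j => Complex.I * (mu j : ℂ) with hc
  have hcinj : Function.Injective c := by
    intro a b hab
    have : (mu a : ℂ) = (mu b : ℂ) := mul_left_cancel₀ Complex.I_ne_zero hab
    exact hinj (by exact_mod_cast this)
  have hFprod : F = ∏ a ∈ Finset.univ.image c, (X - C a) := by
    rw [show F = ∏ j, (X - C (c j)) from hspec, Finset.prod_image (fun x _ y _ h => hcinj h)]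
  have hroots : F.roots = (Finset.univ.image c).val := by
    rw [hFprod]
    exact Polynomial.roots_prod_X_sub_C _
  have hcount : Polynomial.rootMultiplicity r F ≤ 1 := by
    rw [← Polynomial.count_roots, hroots]
    exact Multiset.nodup_iff_count_le_one.mp (Finset.univ.image c).nodup r
  omega

lemma mu_strictMono {n' n : ℕ} (h : n' + 1 = n) (l : Fin n → ℝ) (mu : Fin n' → ℝ)
    (hint : ∀ j : Fin n', l (Fin.cast h j.castSucc) < mu j ∧ mu j < l (Fin.cast h j.succ)) :
    Function.Injective mu := by
  set L : Fin (n' + 1) → ℝ := fun i => l (Fin.cast h i) with hL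
  have hLmono : StrictMono L := by
    rw [Fin.strictMono_iff_lt_succ]
    intro k
    exact lt_trans (hint k).1 (hint k).2
  have hmu : StrictMono mu := by
    intro j j' hjj'
    have h1 : mu j < L j.succ := (hint j).2
    have h2 : L j'.castSucc < mu j' := (hint j').1
    have h3 : L j.succ ≤ L j'.castSucc := by
      apply hLmono.monotone
      have : (j.succ : ℕ) ≤ (j'.castSucc : ℕ) := by
        simp only [Fin.val_succ, Fin.coe_castSucc]
        omega
      exact this
    linarith
  exact hmu.injective

section CompLemmas
variable {N : ℕ} {G : SimpleGraph (Fin N)}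

lemma comp_subset (S : Finset (Fin N)) (v : Fin N) : comp G S v ⊆ S :=
  Finset.filter_subset _ _

lemma mem_comp_self {S : Finset (Fin N)} {v : Fin N} (hv : v ∈ S) : v ∈ comp G S v := by
  refine Finset.mem_filter.mpr ⟨hv, SimpleGraph.Walk.nil, ?_⟩
  intro x hx
  simp only [SimpleGraph.Walk.support_nil, List.mem_singleton] at hx
  rwa [hx]

lemma adj_mem_comp {S : Finset (Fin N)} {v u k : Fin N} (hu : u ∈ comp G S v)
    (hadj : G.Adj u k) (hk : k ∈ S) : k ∈ comp G S v := by
  obtain ⟨hus, p, hp⟩ := Finset.mem_filter.mp hu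
  refine Finset.mem_filter.mpr ⟨hk, p.concat hadj, ?_⟩
  intro x hx
  rw [SimpleGraph.Walk.support_concat, List.mem_append] at hx
  rcases hx with hx | hx
  · exact hp x hx
  · simp only [List.mem_singleton] at hx; rwa [hx]

lemma comp_walk_in {S : Finset (Fin N)} {v u : Fin N} (hu : u ∈ comp G S v) :
    ∃ p : G.Walk v u, ∀ x ∈ p.support, x ∈ comp G S v := by
  obtain ⟨hus, p, hp⟩ := Finset.mem_filter.mp hu
  refine ⟨p, ?_⟩
  intro x hx
  refine Finset.mem_filter.mpr ⟨hp x hx, p.takeUntil x hx, ?_⟩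
  intro y hy
  exact hp y (SimpleGraph.Walk.support_takeUntil_subset p hx hy)

lemma comp_disjoint (htree : G.IsTree) {S : Finset (Fin N)} {w v v' : Fin N}
    (hw : w ∉ S) (hadj : G.Adj w v) (hadj' : G.Adj w v') (hne : v ≠ v')
    {u : Fin N} (hu : u ∈ comp G S v) (hu' : u ∈ comp G S v') : False := by
  obtain ⟨hus, p, hp⟩ := Finset.mem_filter.mp hu
  obtain ⟨hus', q, hq⟩ := Finset.mem_filter.mp hu'
  set r := p.append q.reverse with hr
  have hrsupp : ∀ x ∈ r.support, x ∈ S := by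
    intro x hx
    rw [hr, SimpleGraph.Walk.mem_support_append_iff] at hx
    rcases hx with hx | hx
    · exact hp x hx
    · rw [SimpleGraph.Walk.support_reverse, List.mem_reverse] at hx
      exact hq x hx
  set pp := r.toPath with hpp
  have hppsupp : ∀ x ∈ (pp : G.Walk v v').support, x ∈ S := fun x hx =>
    hrsupp x (SimpleGraph.Walk.support_toPath_subset r hx)
  -- the path through w
  set p2 : G.Walk v v' := SimpleGraph.Walk.cons hadj.symm (SimpleGraph.Walk.cons hadj' .nil)
    with hp2
  have hp2path : p2.IsPath := by
    rw [SimpleGraph.Walk.isPath_def]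
    simp only [hp2, SimpleGraph.Walk.support_cons, SimpleGraph.Walk.support_nil]
    simp [List.nodup_cons, hadj.ne', hadj'.ne, hne]
  have huniq := htree.existsUnique_path v v'
  obtain ⟨P, _, hPuniq⟩ := huniq
  have h1 : (pp : G.Walk v v') = P := hPuniq _ pp.2
  have h2 : p2 = P := hPuniq _ hp2path
  have hwmem : w ∈ p2.support := by
    simp [hp2, SimpleGraph.Walk.support_cons]
  rw [h2, ← h1] at hwmem
  exact hw (hppsupp w hwmem)

lemma comp_cover (htree : G.IsTree) {S : Finset (Fin N)} {w u : Fin N}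
    (hu : u ∈ S) (huw : u ≠ w)
    (hwalk : ∃ p : G.Walk w u, ∀ x ∈ p.support, x ∈ S) :
    ∃ v, G.Adj w v ∧ v ∈ S.erase w ∧ u ∈ comp G (S.erase w) v := by
  obtain ⟨p, hp⟩ := hwalk
  suffices main : ∀ (q : G.Walk w u), q.IsPath → (∀ x ∈ q.support, x ∈ S) →
      ∃ v, G.Adj w v ∧ v ∈ S.erase w ∧ u ∈ comp G (S.erase w) v by
    exact main p.toPath p.toPath.2
      (fun x hx => hp x (SimpleGraph.Walk.support_toPath_subset p hx))
  intro q hqpath hqsupp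
  cases q with
  | nil => exact absurd rfl huw.symm
  | cons hadj tail =>
      rename_i v
      have hnodup := hqpath.support_nodup
      rw [SimpleGraph.Walk.support_cons, List.nodup_cons] at hnodup
      have hwnotin : w ∉ tail.support := hnodup.1
      have htail : ∀ x ∈ tail.support, x ∈ S.erase w := by
        intro x hx
        refine Finset.mem_erase.mpr ⟨?_, hqsupp x (by
          rw [SimpleGraph.Walk.support_cons]; exact List.mem_cons_of_mem _ hx)⟩
        rintro rfl
        exact hwnotin hx
      refine ⟨v, hadj, htail v tail.start_mem_support, ?_⟩
      exact Finset.mem_filter.mpr ⟨htail u tail.end_mem_support, tail, htail⟩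

end CompLemmas

section SkewFacts
variable {N : ℕ} {A : Matrix (Fin N) (Fin N) ℝ}

lemma skew_diag (hskew : Aᵀ = -A) (i : Fin N) : A i i = 0 := by
  have := congrFun (congrFun hskew i) i
  simp only [Matrix.transpose_apply, Matrix.neg_apply] at this
  linarith

lemma skew_symm_zero (hskew : Aᵀ = -A) {i j : Fin N} : A i j = 0 ↔ A j i = 0 := by
  have := congrFun (congrFun hskew j) i
  simp only [Matrix.transpose_apply, Matrix.neg_apply] at this
  constructor <;> intro h <;> rw [h] at this <;> simp at this <;> linarith [this]

lemma graphOf_adj_iff (hskew : Aᵀ = -A) {i j : Fin N} :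
    (graphOf A).Adj i j ↔ i ≠ j ∧ A i j ≠ 0 := by
  rw [graphOf, SimpleGraph.fromRel_adj]
  constructor
  · rintro ⟨hne, h | h⟩
    · exact ⟨hne, h⟩
    · exact ⟨hne, fun h0 => h ((skew_symm_zero hskew).mp h0)⟩
  · rintro ⟨hne, h⟩
    exact ⟨hne, Or.inl h⟩

end SkewFacts

lemma main_induction {N : ℕ} (A : Matrix (Fin N) (Fin N) ℝ) (hskew : Aᵀ = -A)
    (htree : (graphOf A).IsTree) :
    ∀ (k : ℕ) (S : Finset (Fin N)) (w : Fin N), w ∈ S →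
      (∀ u ∈ S, ∃ p : (graphOf A).Walk w u, ∀ x ∈ p.support, x ∈ S) →
      DuarteAux A k S w →
      ∀ Z : Matrix (Fin N) (Fin N) ℝ, Zᵀ = -Z →
        (∀ i j, i ∉ S ∨ j ∉ S → Z i j = 0) →
        (∀ i j, A i j * Z i j = 0) →
        (∀ i j, i ∈ S → j ∈ S → i ≠ w → j ≠ w →
          ∑ x ∈ S, (A i x * Z x j - Z i x * A x j) = 0) →
        Z = 0 := by
  intro k
  induction k with
  | zero =>
      intro S w hwS hconn hD Z hZskew hsupp hHad hcomm
      rw [show S = {w} from hD] at hsupp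
      ext i j
      simp only [Matrix.zero_apply]
      by_cases hi : i = w
      · by_cases hj : j = w
        · subst hi; subst hj; exact skew_diag hZskew _
        · exact hsupp i j (Or.inr (by simp [hj]))
      · exact hsupp i j (Or.inl (by simp [hi]))
  | succ k IH =>
      intro S w hwS hconn hD Z hZskew hsupp hHad hcomm
      rcases hD with hD | ⟨hint, hrec⟩
      · -- same as base case
        rw [hD] at hsupp
        ext i j
        simp only [Matrix.zero_apply]
        by_cases hi : i = w
        · by_cases hj : j = w
          · subst hi; subst hj; exact skew_diag hZskew _
          · exact hsupp i j (Or.inr (by simp [hj]))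
        · exact hsupp i j (Or.inl (by simp [hi]))
      · set G := graphOf A with hG
        set S' := S.erase w with hS'
        have hwS' : w ∉ S' := Finset.notMem_erase w S
        have hS'sub : S' ⊆ S := Finset.erase_subset w S
        have hZdiag : ∀ i, Z i i = 0 := skew_diag hZskew
        have hZsymm : ∀ i j : Fin N, Z i j = 0 ↔ Z j i = 0 := fun i j => skew_symm_zero hZskew
        have hAdiag : ∀ i, A i i = 0 := skew_diag hskew
        have hAsymm : ∀ i j : Fin N, A i j = 0 ↔ A j i = 0 := fun i j => skew_symm_zero hskew
        have f1 : ∀ v, G.Adj w v → A w v ≠ 0 ∧ A v w ≠ 0 := by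
          intro v hv
          have h := (graphOf_adj_iff hskew).mp hv
          exact ⟨h.2, fun h0 => h.2 ((hAsymm v w).mp h0)⟩
        have f2 : ∀ v v' i, G.Adj w v → G.Adj w v' → i ∈ comp G S' v → i ∈ comp G S' v' →
            v = v' := by
          intro v v' i hv hv' hi hi'
          by_contra hne
          exact comp_disjoint htree hwS' hv hv' hne hi hi'
        have f3 : ∀ u ∈ S', ∃ v, G.Adj w v ∧ v ∈ S' ∧ u ∈ comp G S' v := by
          intro u hu
          have huS := hS'sub hu
          have huw : u ≠ w := Finset.ne_of_mem_erase hu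
          exact comp_cover htree huS huw (hconn u huS)
        have f4 : ∀ v i x, i ∈ comp G S' v → x ∈ S' → A i x ≠ 0 → i ≠ x →
            x ∈ comp G S' v := by
          intro v i x hi hx hAix hne
          exact adj_mem_comp hi ((graphOf_adj_iff hskew).mpr ⟨hne, hAix⟩) hx
        have f5 : ∀ v i, G.Adj w v → v ∈ S' → i ∈ comp G S' v → i ≠ v → A i w = 0 := by
          intro v i hv hvS hi hiv
          by_contra h0
          have hiS' : i ∈ S' := comp_subset _ _ hi
          have hiw : i ≠ w := Finset.ne_of_mem_erase hiS'
          have hadj : G.Adj w i := (graphOf_adj_iff hskew).mpr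
            ⟨fun h => hiw h.symm, fun hh => h0 ((hAsymm w i).mp hh)⟩
          exact hiv (f2 i v i hadj hv (mem_comp_self hiS') hi)
        -- Step 1 : diagonal blocks vanish
        have step1 : ∀ v, G.Adj w v → v ∈ S' →
            ∀ i ∈ comp G S' v, ∀ j ∈ comp G S' v, Z i j = 0 := by
          intro v hadjv hvS'
          set Cv := comp G S' v with hCvdef
          have hvCv : v ∈ Cv := mem_comp_self hvS'
          have hCvS : Cv ⊆ S := (comp_subset S' v).trans hS'sub
          set Zv : Matrix (Fin N) (Fin N) ℝ :=
            fun i j => if i ∈ Cv ∧ j ∈ Cv then Z i j else 0 with hZv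
          have hZvskew : Zvᵀ = -Zv := by
            ext i j
            simp only [Matrix.transpose_apply, Matrix.neg_apply]
            simp only [hZv]
            by_cases h : i ∈ Cv ∧ j ∈ Cv
            · rw [if_pos ⟨h.2, h.1⟩, if_pos h]
              have h2 := congrFun (congrFun hZskew i) j
              simpa [Matrix.transpose_apply, Matrix.neg_apply] using h2
            · rw [if_neg (fun hh => h ⟨hh.2, hh.1⟩), if_neg h, neg_zero]
          have hZv0 : Zv = 0 := by
            apply IH Cv v hvCv (fun u hu => comp_walk_in hu) (hrec v hvS' hadjv) Zv hZvskew
            · intro i j hij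
              show (if i ∈ Cv ∧ j ∈ Cv then Z i j else 0) = 0
              exact if_neg (fun hh => by rcases hij with h | h; exacts [h hh.1, h hh.2])
            · intro i j
              show A i j * (if i ∈ Cv ∧ j ∈ Cv then Z i j else 0) = 0
              by_cases h : i ∈ Cv ∧ j ∈ Cv
              · rw [if_pos h]; exact hHad i j
              · rw [if_neg h, mul_zero]
            · intro i j hiC hjC hiv hjv
              have hiS' : i ∈ S' := comp_subset _ _ hiC
              have hjS' : j ∈ S' := comp_subset _ _ hjC
              have key : ∀ x ∈ S, x ∉ Cv → A i x * Z x j - Z i x * A x j = 0 := by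
                intro x hxS hxC
                have h1 : A i x = 0 := by
                  by_cases hxw : x = w
                  · rw [hxw]; exact f5 v i hadjv hvS' hiC hiv
                  · by_contra hA
                    have hix : i ≠ x := fun h => hxC (h ▸ hiC)
                    exact hxC (f4 v i x hiC (Finset.mem_erase.mpr ⟨hxw, hxS⟩) hA hix)
                have h2 : A x j = 0 := by
                  by_cases hxw : x = w
                  · rw [hxw]
                    exact (hAsymm j w).mp (f5 v j hadjv hvS' hjC hjv)
                  · by_contra hA
                    have hjx : j ≠ x := fun h => hxC (h ▸ hjC)
                    exact hxC (f4 v j x hjC (Finset.mem_erase.mpr ⟨hxw, hxS⟩)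
                      (fun h0 => hA ((hAsymm j x).mp h0)) hjx)
                rw [h1, h2]; ring
              have e0 : ∑ x ∈ Cv, (A i x * Zv x j - Zv i x * A x j)
                  = ∑ x ∈ Cv, (A i x * Z x j - Z i x * A x j) := by
                refine Finset.sum_congr rfl (fun x hx => ?_)
                show A i x * (if x ∈ Cv ∧ j ∈ Cv then Z x j else 0)
                    - (if i ∈ Cv ∧ x ∈ Cv then Z i x else 0) * A x j = _
                rw [if_pos ⟨hx, hjC⟩, if_pos ⟨hiC, hx⟩]
              rw [e0, Finset.sum_subset hCvS key]
              exact hcomm i j (hS'sub hiS') (hS'sub hjS')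
                (Finset.ne_of_mem_erase hiS') (Finset.ne_of_mem_erase hjS')
          intro i hi j hj
          have h0 := congrFun (congrFun hZv0 i) j
          have h1 : (if i ∈ Cv ∧ j ∈ Cv then Z i j else 0) = 0 := h0
          rwa [if_pos ⟨hi, hj⟩] at h1
        -- Step 2 : row w of Z vanishes
        have step2 : ∀ j, Z w j = 0 := by
          intro j
          by_cases hjS : j ∈ S
          · by_cases hjw : j = w
            · rw [hjw]; exact hZdiag w
            · have hjS' : j ∈ S' := Finset.mem_erase.mpr ⟨hjw, hjS⟩
              obtain ⟨v, hadjv, hvS', hjC⟩ := f3 j hjS'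
              by_cases hjv : j = v
              · subst hjv
                exact (mul_eq_zero.mp (hHad w j)).resolve_left (f1 j hadjv).1
              · have hvw : v ≠ w := Finset.ne_of_mem_erase hvS'
                have hvCv : v ∈ comp G S' v := mem_comp_self hvS'
                have hsum := hcomm v j (hS'sub hvS') hjS hvw hjw
                have hsingle : ∑ x ∈ S, (A v x * Z x j - Z v x * A x j)
                    = A v w * Z w j := by
                  rw [Finset.sum_eq_single_of_mem w hwS]
                  · have hAwj : A w j = 0 :=
                      (hAsymm j w).mp (f5 v j hadjv hvS' hjC hjv)
                    rw [hAwj]; ring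
                  · intro x hxS hxw
                    have hxS' : x ∈ S' := Finset.mem_erase.mpr ⟨hxw, hxS⟩
                    have h1 : A v x * Z x j = 0 := by
                      by_cases hvx : v = x
                      · rw [← hvx, hAdiag, zero_mul]
                      · by_cases hAvx : A v x = 0
                        · rw [hAvx, zero_mul]
                        · have hxC : x ∈ comp G S' v := f4 v v x hvCv hxS' hAvx hvx
                          rw [step1 v hadjv hvS' x hxC j hjC, mul_zero]
                    have h2 : Z v x * A x j = 0 := by
                      by_cases hjx : j = x
                      · rw [← hjx, hAdiag, mul_zero]
                      · by_cases hAxj : A x j = 0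
                        · rw [hAxj, mul_zero]
                        · have hAjx : A j x ≠ 0 := fun h0 => hAxj ((hAsymm j x).mp h0)
                          have hxC : x ∈ comp G S' v := f4 v j x hjC hxS' hAjx hjx
                          rw [step1 v hadjv hvS' v hvCv x hxC, zero_mul]
                    rw [h1, h2, sub_zero]
                rw [hsingle] at hsum
                exact (mul_eq_zero.mp hsum).resolve_left (f1 v hadjv).2
          · exact hsupp w j (Or.inr hjS)
        have step2' : ∀ j, Z j w = 0 := fun j => (hZsymm w j).mp (step2 j)
        -- unpack interlacing
        obtain ⟨hcard, l, mu, hspecA, hspecM, hineq⟩ := hint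
        have hmuinj : Function.Injective mu := mu_strictMono hcard l mu hineq
        -- Step 3 : off-diagonal blocks vanish
        have step3 : ∀ v v', G.Adj w v → G.Adj w v' → v ∈ S' → v' ∈ S' → v ≠ v' →
            ∀ i ∈ comp G S' v, ∀ j ∈ comp G S' v', Z i j = 0 := by
          intro v v' hadjv hadjv' hvS' hv'S' hvv'
          set Cv := comp G S' v with hCv
          set Cv' := comp G S' v' with hCv'
          have hCvS' : Cv ⊆ S' := comp_subset _ _
          have hCv'S' : Cv' ⊆ S' := comp_subset _ _
          have hdisjCC : ∀ x, x ∈ Cv' → x ∉ Cv := by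
            intro x hx hx'
            exact hvv' (f2 v v' x hadjv hadjv' hx' hx)
          have hC'sub : Cv' ⊆ S' \ Cv := fun x hx =>
            Finset.mem_sdiff.mpr ⟨hCv'S' hx, hdisjCC x hx⟩
          have hb1 : ∀ i j : Fin N, i ∈ Cv → j ∈ S' → j ∉ Cv → A i j = 0 ∧ A j i = 0 := by
            intro i j hi hj hjC
            have hij : i ≠ j := fun h => hjC (h ▸ hi)
            constructor
            · by_contra hA
              exact hjC (f4 v i j hi hj hA hij)
            · by_contra hA
              exact hjC (f4 v i j hi hj (fun h0 => hA ((hAsymm i j).mp h0)) hij)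
          have hb2 : ∀ i j : Fin N, i ∈ Cv' → j ∈ S' \ Cv → j ∉ Cv' → A i j = 0 ∧ A j i = 0 := by
            intro i j hi hj hjC
            have hjS' : j ∈ S' := (Finset.mem_sdiff.mp hj).1
            have hij : i ≠ j := fun h => hjC (h ▸ hi)
            constructor
            · by_contra hA
              exact hjC (f4 v' i j hi hjS' hA hij)
            · by_contra hA
              exact hjC (f4 v' i j hi hjS' (fun h0 => hA ((hAsymm i j).mp h0)) hij)
          set W : Matrix {x // x ∈ Cv} {x // x ∈ Cv'} ℝ := fun a b => Z a.1 b.1 with hWdef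
          have hsyl : subOn A Cv * W = W * subOn A Cv' := by
            ext a b
            have ha : a.1 ∈ Cv := a.2
            have hb : b.1 ∈ Cv' := b.2
            have haS : a.1 ∈ S := hS'sub (hCvS' ha)
            have hbS : b.1 ∈ S := hS'sub (hCv'S' hb)
            have haw : a.1 ≠ w := Finset.ne_of_mem_erase (hCvS' ha)
            have hbw : b.1 ≠ w := Finset.ne_of_mem_erase (hCv'S' hb)
            have hsum := hcomm a.1 b.1 haS hbS haw hbw
            have e1 : ∑ x ∈ S, A a.1 x * Z x b.1 = ∑ x ∈ Cv, A a.1 x * Z x b.1 := by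
              refine (Finset.sum_subset (hCvS'.trans hS'sub) ?_).symm
              intro x hxS hxC
              by_cases hxw : x = w
              · rw [hxw, step2, mul_zero]
              · have hxS' : x ∈ S' := Finset.mem_erase.mpr ⟨hxw, hxS⟩
                have hax : a.1 ≠ x := fun h => hxC (h ▸ ha)
                by_cases hA : A a.1 x = 0
                · rw [hA, zero_mul]
                · exact absurd (f4 v a.1 x ha hxS' hA hax) hxC
            have e2 : ∑ x ∈ S, Z a.1 x * A x b.1 = ∑ x ∈ Cv', Z a.1 x * A x b.1 := by
              refine (Finset.sum_subset (hCv'S'.trans hS'sub) ?_).symm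
              intro x hxS hxC
              by_cases hxw : x = w
              · rw [hxw, step2', zero_mul]
              · have hxS' : x ∈ S' := Finset.mem_erase.mpr ⟨hxw, hxS⟩
                have hbx : b.1 ≠ x := fun h => hxC (h ▸ hb)
                by_cases hA : A x b.1 = 0
                · rw [hA, mul_zero]
                · have hAbx : A b.1 x ≠ 0 := fun h0 => hA ((hAsymm b.1 x).mp h0)
                  exact absurd (f4 v' b.1 x hb hxS' hAbx hbx) hxC
            rw [Finset.sum_sub_distrib, e1, e2, sub_eq_zero] at hsum
            rw [Matrix.mul_apply, Matrix.mul_apply]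
            calc ∑ x : {x // x ∈ Cv}, subOn A Cv a x * W x b
                = ∑ x ∈ Cv, A a.1 x * Z x b.1 := by
                  rw [← Finset.sum_coe_sort Cv (fun x => A a.1 x * Z x b.1)]
                  rfl
              _ = ∑ x ∈ Cv', Z a.1 x * A x b.1 := hsum
              _ = ∑ x : {x // x ∈ Cv'}, W a x * subOn A Cv' x b := by
                  rw [← Finset.sum_coe_sort Cv' (fun x => Z a.1 x * A x b.1)]
                  rfl
          have hdisj : ∀ r : ℂ,
              (((subOn A Cv').map (Complex.ofReal : ℝ → ℂ)).charpoly).IsRoot r →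
              ¬ (((subOn A Cv).map (Complex.ofReal : ℝ → ℂ)).charpoly).IsRoot r :=
            fun r h1 h2 =>
              no_common_root A S' Cv Cv' hCvS' hC'sub hb1 hb2 mu hmuinj hspecM r h1 h2
          have hW0 : W = 0 := my_sylvester _ _ _ hsyl hdisj
          intro i hi j hj
          exact congrFun (congrFun hW0 ⟨i, hi⟩) ⟨j, hj⟩
        -- final assembly
        ext i j
        simp only [Matrix.zero_apply]
        by_cases hiS : i ∈ S
        · by_cases hjS : j ∈ S
          · by_cases hiw : i = w
            · rw [hiw]; exact step2 j
            · by_cases hjw : j = w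
              · rw [hjw]; exact step2' i
              · have hiS' : i ∈ S' := Finset.mem_erase.mpr ⟨hiw, hiS⟩
                have hjS' : j ∈ S' := Finset.mem_erase.mpr ⟨hjw, hjS⟩
                obtain ⟨v, hadjv, hvS', hiC⟩ := f3 i hiS'
                obtain ⟨v', hadjv', hv'S', hjC⟩ := f3 j hjS'
                by_cases hvv' : v = v'
                · subst hvv'
                  exact step1 v hadjv hvS' i hiC j hjC
                · exact step3 v v' hadjv hadjv' hvS' hv'S' hvv' i hiC j hjC
          · exact hsupp i j (Or.inr hjS)
        · exact hsupp i j (Or.inl hiS)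

/-- Commutator lemma: if `A` is skew-symmetric, its graph is a tree, `A` has
the Duarte property with respect to `w`, and `Y` is skew-symmetric with
`A ∘ Y = 0` and `[A,Y](w) = 0`, then `Y = 0`. -/
theorem stmt_10 {N : ℕ} (A : Matrix (Fin N) (Fin N) ℝ) (hskew : Aᵀ = -A)
    (htree : (graphOf A).IsTree) (w : Fin N) (hD : Duarte A w)
    (Y : Matrix (Fin N) (Fin N) ℝ) (hYskew : Yᵀ = -Y)
    (hHad : ∀ i j, A i j * Y i j = 0)
    (hcomm : ∀ i j, i ≠ w → j ≠ w → (A * Y - Y * A) i j = 0) :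
    Y = 0 := by
  apply main_induction A hskew htree N Finset.univ w (Finset.mem_univ w)
  · intro u _
    obtain ⟨p⟩ := (htree.isConnected.preconnected w u)
    exact ⟨p, fun x _ => Finset.mem_univ x⟩
  · exact hD
  · exact hYskew
  · intro i j hij
    rcases hij with h | h <;> exact absurd (Finset.mem_univ _) h
  · exact hHad
  · intro i j _ _ hiw hjw
    have h := hcomm i j hiw hjw
    rw [Matrix.sub_apply, Matrix.mul_apply, Matrix.mul_apply, ← Finset.sum_sub_distrib] at h
    exact h
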